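/- arXiv:1605.09323 — 2 statements merged into one kernel-verified Lean document; each statement's English description precedes it below -/
import Mathlib

section
/- Let p be an odd prime and χ a nontrivial Dirichlet character mod p. Then |L(2,χ)| ≤ |Σ_{n=1}^{(p-1)/2} χ(n)/n²| + 24√p·ln(p)/(p+1)², where L(2,χ) = Σ_{n≥1} χ(n)/n². -/
open Finset Real Complex ZMod

lemma aux_exp_lb (θ : ℝ) (hθ : |θ| ≤ π) :
    2 / π * |θ| ≤ ‖Complex.exp (θ * Complex.I) - 1‖ := by
  have hcos := Real.cos_le_one_sub_mul_cos_sq hθ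
  have hpi := Real.pi_pos
  rw [Complex.exp_mul_I, ← Complex.ofReal_cos, ← Complex.ofReal_sin]
  have : (Real.cos θ : ℂ) + (Real.sin θ : ℂ) * Complex.I - 1
      = ((Real.cos θ - 1 : ℝ) : ℂ) + ((Real.sin θ : ℝ) : ℂ) * Complex.I := by
    push_cast; ring
  rw [this, Complex.norm_def, Complex.normSq_add_mul_I]
  rw [show (2 / π * |θ|) = Real.sqrt ((2/π * |θ|)^2) by
    rw [Real.sqrt_sq (by positivity)]]
  apply Real.sqrt_le_sqrt
  have hs := Real.sin_sq_add_cos_sq θ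
  have h2 : (2/π*|θ|)^2 = 2*(2/π^2 * θ^2) := by
    rw [mul_pow, _root_.sq_abs θ]; field_simp
  have key : (Real.cos θ - 1)^2 + Real.sin θ^2 = 2 - 2*Real.cos θ := by nlinarith [hs]
  rw [h2, key]; linarith

lemma aux_geom {z : ℂ} (hz : ‖z‖ = 1) (hz1 : z ≠ 1) (M N : ℕ) :
    ‖∑ n ∈ Finset.Ioc M N, z ^ n‖ ≤ 2 / ‖z - 1‖ := by
  have hz0 : ‖z - 1‖ ≠ 0 := by
    simpa [sub_eq_zero] using hz1
  rcases le_or_gt (M+1) (N+1) with h | h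
  · have he : Finset.Ioc M N = Finset.Ico (M+1) (N+1) := by
      rw [Finset.Ico_add_one_right_eq_Icc, Finset.Icc_add_one_left_eq_Ioc]
    rw [he, geom_sum_Ico hz1 h, norm_div]
    gcongr
    calc ‖z^(N+1) - z^(M+1)‖
        ≤ ‖z^(N+1)‖ + ‖z^(M+1)‖ := by
          simpa using norm_sub_le_norm_sub_add_norm_sub (z^(N+1)) 0 (z^(M+1))
    _ = 2 := by simp [norm_pow, hz]; norm_num
  · rw [Finset.Ioc_eq_empty (by omega)]
    simp
    positivity

lemma aux_harmonic (n : ℕ) : ∑ a ∈ Finset.Icc 1 n, (a:ℝ)⁻¹ ≤ 1 + Real.log n := by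
  have h := harmonic_le_one_add_log n
  rw [harmonic_eq_sum_Icc] at h
  push_cast at h
  exact h

lemma aux_abel_identity (f : ℕ → ℂ) (b : ℕ → ℂ) (M : ℕ) :
    ∀ N, M ≤ N →
      ∑ n ∈ Finset.Ioc M N, f n * b n =
        (∑ n ∈ Finset.Ioc M N, (∑ k ∈ Finset.Ioc M n, f k) * (b n - b (n+1)))
          + (∑ k ∈ Finset.Ioc M N, f k) * b (N+1) := by
  intro N hN
  induction N, hN using Nat.le_induction with
  | base => simp
  | succ N hMN ih =>
    rw [Finset.sum_Ioc_succ_top (by omega), Finset.sum_Ioc_succ_top (by omega),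
      Finset.sum_Ioc_succ_top (by omega), ih]
    ring

lemma aux_abel_bound (f : ℕ → ℂ) (b : ℕ → ℝ) (C : ℝ) (M : ℕ)
    (hb0 : ∀ n, 0 ≤ b n) (hbmono : ∀ n, M < n → b (n+1) ≤ b n)
    (hS : ∀ N, ‖∑ k ∈ Finset.Ioc M N, f k‖ ≤ C) (N : ℕ) :
    ‖∑ n ∈ Finset.Ioc M N, f n * (b n : ℂ)‖ ≤ C * b (M+1) := by
  have hC : 0 ≤ C := le_trans (by positivity) (hS M)
  rcases le_or_gt M N with h | h
  · rw [aux_abel_identity f (fun n => (b n : ℂ)) M N h]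
    have htel : ∀ K, M ≤ K → ∑ n ∈ Finset.Ioc M K, (b n - b (n+1)) = b (M+1) - b (K+1) := by
      intro K hK
      induction K, hK using Nat.le_induction with
      | base => simp
      | succ K hMK ih => rw [Finset.sum_Ioc_succ_top (by omega), ih]; ring
    calc ‖_‖
        ≤ ‖∑ n ∈ Finset.Ioc M N, (∑ k ∈ Finset.Ioc M n, f k) * ((b n : ℂ) - (b (n+1) : ℂ))‖
          + ‖(∑ k ∈ Finset.Ioc M N, f k) * (b (N+1) : ℂ)‖ := norm_add_le _ _
      _ ≤ (∑ n ∈ Finset.Ioc M N, C * (b n - b (n+1))) + C * b (N+1) := by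
          gcongr ?_ + ?_
          · refine le_trans (norm_sum_le _ _) (Finset.sum_le_sum fun n hn => ?_)
            rw [norm_mul]
            have hmem := Finset.mem_Ioc.mp hn
            have hb' : b (n+1) ≤ b n := hbmono n hmem.1
            have : ‖(b n : ℂ) - (b (n+1) : ℂ)‖ = b n - b (n+1) := by
              rw [← Complex.ofReal_sub, Complex.norm_real, Real.norm_eq_abs, _root_.abs_of_nonneg (by linarith)]
            rw [this]
            exact mul_le_mul_of_nonneg_right (hS n) (by linarith)
          · rw [norm_mul, Complex.norm_real, Real.norm_eq_abs, _root_.abs_of_nonneg (hb0 _)]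
            exact mul_le_mul_of_nonneg_right (hS N) (hb0 _)
      _ = C * (b (M+1) - b (N+1)) + C * b (N+1) := by rw [← Finset.mul_sum, htel N h]
      _ = C * b (M+1) := by ring
  · rw [Finset.Ioc_eq_empty (by omega)]
    simpa using mul_nonneg hC (hb0 _)

lemma aux_prim {p : ℕ} [Fact p.Prime] (χ : DirichletCharacter ℂ p) (hχ : χ ≠ 1) : χ.IsPrimitive := by
  have hp : p.Prime := Fact.out
  have hd := DirichletCharacter.conductor_dvd_level χ
  rcases (Nat.Prime.eq_one_or_self_of_dvd hp _ hd) with h | h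
  · exact absurd ((DirichletCharacter.eq_one_iff_conductor_eq_one).mpr h) hχ
  · exact h

lemma aux_gauss_abs {p : ℕ} [Fact p.Prime] (χ : DirichletCharacter ℂ p) (hχ : χ ≠ 1) :
    ‖gaussSum χ ZMod.stdAddChar‖ = Real.sqrt p := by
  have hconj : (starRingEnd ℂ) (gaussSum χ ZMod.stdAddChar)
      = gaussSum χ⁻¹ (ZMod.stdAddChar)⁻¹ := by
    rw [gaussSum, gaussSum, map_sum]
    refine Finset.sum_congr rfl fun j _ => ?_
    rw [map_mul, ← RCLike.star_def, MulChar.star_apply' χ j]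
    congr 1
    rw [AddChar.inv_apply, ZMod.stdAddChar_apply, ZMod.stdAddChar_apply,
      RCLike.star_def, ← Circle.coe_inv_eq_conj, AddChar.map_neg_eq_inv]
  have hmul := gaussSum_mul_gaussSum_eq_card hχ (ZMod.isPrimitive_stdAddChar p)
  have : (gaussSum χ ZMod.stdAddChar) * (starRingEnd ℂ) (gaussSum χ ZMod.stdAddChar)
      = (p : ℂ) := by
    rw [hconj, hmul]; simp [ZMod.card]
  rw [Complex.mul_conj] at this
  have hn : Complex.normSq (gaussSum χ ZMod.stdAddChar) = p := by
    exact_mod_cast congrArg Complex.re this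
  rw [Complex.norm_def, hn]

lemma aux_key {p : ℕ} [Fact p.Prime] (χ : DirichletCharacter ℂ p) (hχ : χ ≠ 1) (n : ℕ) :
    χ (n : ZMod p) * gaussSum χ⁻¹ ZMod.stdAddChar
      = ∑ j : ZMod p, χ⁻¹ j * ZMod.stdAddChar (j * (n : ZMod p)) := by
  have hprim := aux_prim (χ⁻¹) (by simpa using hχ)
  have h := DirichletCharacter.IsPrimitive.fourierTransform_eq_inv_mul_gaussSum hprim
    (-(n : ZMod p))
  rw [ZMod.dft_apply] at h
  simp only [inv_inv, neg_neg, smul_eq_mul, mul_neg, neg_mul] at h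
  rw [← h]
  exact Finset.sum_congr rfl fun j _ => mul_comm _ _

lemma aux_z_bound {p : ℕ} [Fact p.Prime] (hp : 3 ≤ p) {j : ZMod p} (hj : j ≠ 0) (M N : ℕ) :
    ‖∑ n ∈ Finset.Ioc M N, (ZMod.stdAddChar j)^n‖
      ≤ (p:ℝ) / (2 * min (j.val:ℝ) ((p:ℝ) - j.val)) := by
  have hpi := Real.pi_pos
  have hp0 : 0 < (p:ℝ) := by positivity
  have hv1 : 1 ≤ j.val := by
    rcases Nat.eq_zero_or_pos j.val with h | h
    · exact absurd ((ZMod.val_eq_zero j).mp h) hj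
    · exact h
  have hvp : j.val < p := ZMod.val_lt j
  set a := j.val with ha
  have hz : ZMod.stdAddChar j = Complex.exp ((2*π*a/p : ℝ) * Complex.I) := by
    have h1 : ((a : ℤ) : ZMod p) = j := by
      push_cast
      exact ZMod.natCast_rightInverse j
    rw [← h1, ZMod.stdAddChar_coe]
    congr 1
    push_cast
    ring
  have habs1 : ‖ZMod.stdAddChar j‖ = 1 := by
    rw [hz, Complex.norm_exp_ofReal_mul_I]
  have hminpos : 0 < min (a:ℝ) ((p:ℝ) - a) := by
    apply lt_min
    · exact_mod_cast hv1
    · have : (a:ℝ) < p := by exact_mod_cast hvp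
      linarith
  -- lower bound |z - 1| ≥ 4 * min / p
  have hlow : 4 * min (a:ℝ) ((p:ℝ) - a) / p ≤ ‖ZMod.stdAddChar j - 1‖ := by
    rcases le_or_gt (2*a) p with hcase | hcase
    · have hmin : min (a:ℝ) ((p:ℝ) - a) = a := by
        apply min_eq_left
        have : 2*(a:ℝ) ≤ p := by exact_mod_cast hcase
        linarith
      have hθ : |2*π*a/p| ≤ π := by
        rw [_root_.abs_of_nonneg (by positivity)]
        rw [div_le_iff₀ hp0]
        have : 2*(a:ℝ) ≤ p := by exact_mod_cast hcase
        nlinarith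
      have := aux_exp_lb (2*π*a/p) hθ
      rw [← hz] at this
      rw [_root_.abs_of_nonneg (by positivity)] at this
      rw [hmin]
      calc 4 * (a:ℝ) / p = 2/π * (2*π*a/p) := by field_simp; ring
        _ ≤ _ := this
    · have hmin : min (a:ℝ) ((p:ℝ) - a) = (p:ℝ) - a := by
        apply min_eq_right
        have : (p:ℝ) < 2*a := by exact_mod_cast hcase
        linarith
      set θ : ℝ := 2*π*a/p - 2*π with hθdef
      have hexp : Complex.exp ((θ:ℝ) * Complex.I) = ZMod.stdAddChar j := by
        rw [hz]
        have : ((θ:ℝ) : ℂ) * Complex.I = ((2*π*a/p : ℝ) : ℂ) * Complex.I - 2*π*Complex.I := by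
          rw [hθdef]; push_cast; ring
        rw [this, Complex.exp_sub, Complex.exp_two_pi_mul_I, div_one]
      have hθabs : |θ| = 2*π*((p:ℝ)-a)/p := by
        rw [abs_of_nonpos]
        · rw [hθdef]; field_simp; ring
        · rw [hθdef]
          have : (a:ℝ) < p := by exact_mod_cast hvp
          rw [sub_nonpos, div_le_iff₀ hp0]
          nlinarith
      have hθle : |θ| ≤ π := by
        rw [hθabs, div_le_iff₀ hp0]
        have : (p:ℝ) < 2*a := by exact_mod_cast hcase
        nlinarith
      have := aux_exp_lb θ hθle
      rw [hexp, hθabs] at this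
      rw [hmin]
      calc 4 * ((p:ℝ) - a) / p = 2/π * (2*π*((p:ℝ)-a)/p) := by field_simp; ring
        _ ≤ _ := this
  have hne1 : ZMod.stdAddChar j ≠ 1 := by
    intro h
    rw [h, sub_self, norm_zero] at hlow
    have h4 : 0 < 4 * min (a:ℝ) ((p:ℝ) - a) / p := by positivity
    linarith
  calc ‖∑ n ∈ Finset.Ioc M N, (ZMod.stdAddChar j)^n‖
      ≤ 2 / ‖ZMod.stdAddChar j - 1‖ := aux_geom habs1 hne1 M N
    _ ≤ 2 / (4 * min (a:ℝ) ((p:ℝ) - a) / p) := by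
        apply div_le_div_of_nonneg_left (by norm_num) (by positivity) hlow
    _ = (p:ℝ) / (2 * min (a:ℝ) ((p:ℝ) - a)) := by
        field_simp
        ring

lemma aux_pv {p : ℕ} [Fact p.Prime] (hp3 : 3 ≤ p) (hodd : Odd p) (χ : DirichletCharacter ℂ p) (hχ : χ ≠ 1) (M N : ℕ) :
    ‖∑ n ∈ Finset.Ioc M N, χ (n : ZMod p)‖
      ≤ Real.sqrt p * (1 + Real.log p) := by
  have hp0 : 0 < (p:ℝ) := by positivity
  have hsq : 0 < Real.sqrt p := Real.sqrt_pos.mpr hp0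
  set τ := gaussSum χ⁻¹ ZMod.stdAddChar with hτdef
  have hinv : (χ⁻¹ : DirichletCharacter ℂ p) ≠ 1 := by simpa using hχ
  have hτ : ‖τ‖ = Real.sqrt p := aux_gauss_abs χ⁻¹ hinv
  set S := ∑ n ∈ Finset.Ioc M N, χ (n : ZMod p) with hSdef
  set m := (p - 1) / 2 with hmdef
  have hpm : p - 1 = 2 * m := by
    obtain ⟨k, hk⟩ := hodd; omega
  -- identity
  have hid : τ * S = ∑ j : ZMod p, χ⁻¹ j * ∑ n ∈ Finset.Ioc M N, (ZMod.stdAddChar j)^n := by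
    rw [hSdef, Finset.mul_sum]
    have h1 : ∀ n ∈ Finset.Ioc M N, τ * χ (n : ZMod p)
        = ∑ j : ZMod p, χ⁻¹ j * ZMod.stdAddChar (j * (n : ZMod p)) := by
      intro n _
      rw [mul_comm, aux_key χ hχ n]
    rw [Finset.sum_congr rfl h1, Finset.sum_comm]
    refine Finset.sum_congr rfl fun j _ => ?_
    rw [Finset.mul_sum]
    refine Finset.sum_congr rfl fun n _ => ?_
    congr 1
    rw [show j * (n : ZMod p) = n • j by rw [nsmul_eq_mul, mul_comm],
      AddChar.map_nsmul_eq_pow]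
  -- bound
  have hbound : ‖τ * S‖
      ≤ ∑ j ∈ (Finset.univ : Finset (ZMod p)).erase 0,
          (p:ℝ) / (2 * min (j.val:ℝ) ((p:ℝ) - j.val)) := by
    rw [hid]
    have h00 : (χ⁻¹ : DirichletCharacter ℂ p) 0 = 0 :=
      MulChar.map_nonunit _ not_isUnit_zero
    rw [← Finset.sum_erase (Finset.univ : Finset (ZMod p))
      (by rw [h00, zero_mul] :
        (χ⁻¹ (0 : ZMod p) : ℂ) * ∑ n ∈ Finset.Ioc M N, (ZMod.stdAddChar (0 : ZMod p))^n = 0)]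
    refine le_trans (norm_sum_le _ _) (Finset.sum_le_sum fun j hj => ?_)
    have hj0 : j ≠ 0 := Finset.ne_of_mem_erase hj
    rw [norm_mul]
    calc ‖χ⁻¹ j‖ * ‖∑ n ∈ Finset.Ioc M N, (ZMod.stdAddChar j)^n‖
        ≤ 1 * ((p:ℝ) / (2 * min (j.val:ℝ) ((p:ℝ) - j.val))) := by
          apply mul_le_mul
          · exact DirichletCharacter.norm_le_one χ⁻¹ j
          · exact aux_z_bound hp3 hj0 M N
          · positivity
          · norm_num
      _ = (p:ℝ) / (2 * min (j.val:ℝ) ((p:ℝ) - j.val)) := one_mul _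
  -- reindex to Icc 1 (p-1)
  have hre : ∑ j ∈ (Finset.univ : Finset (ZMod p)).erase 0,
        (p:ℝ) / (2 * min (j.val:ℝ) ((p:ℝ) - j.val))
      = ∑ a ∈ Finset.Icc 1 (p-1), (p:ℝ) / (2 * min (a:ℝ) ((p:ℝ) - a)) := by
    refine Finset.sum_nbij' (fun j => j.val) (fun a => (a : ZMod p)) ?_ ?_ ?_ ?_ ?_
    · intro j hj
      have hj0 : j ≠ 0 := Finset.ne_of_mem_erase hj
      have h1 : 1 ≤ j.val := by
        rcases Nat.eq_zero_or_pos j.val with h | h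
        · exact absurd ((ZMod.val_eq_zero j).mp h) hj0
        · exact h
      have h2 : j.val < p := ZMod.val_lt j
      exact Finset.mem_Icc.mpr ⟨h1, by omega⟩
    · intro a ha
      rw [Finset.mem_Icc] at ha
      refine Finset.mem_erase.mpr ⟨?_, Finset.mem_univ _⟩
      intro h
      rw [ZMod.natCast_eq_zero_iff] at h
      have := Nat.le_of_dvd (by omega) h
      omega
    · intro j _
      exact ZMod.natCast_rightInverse j
    · intro a ha
      rw [Finset.mem_Icc] at ha
      exact ZMod.val_cast_of_lt (by omega)
    · intro j _
      rfl
  -- split and reflect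
  have hm1 : 1 ≤ m := by omega
  have hsplit : ∑ a ∈ Finset.Icc 1 (p-1), (p:ℝ) / (2 * min (a:ℝ) ((p:ℝ) - a))
      = (∑ a ∈ Finset.Ioc 0 m, (p:ℝ) / (2 * min (a:ℝ) ((p:ℝ) - a)))
        + ∑ a ∈ Finset.Ioc m (p-1), (p:ℝ) / (2 * min (a:ℝ) ((p:ℝ) - a)) := by
    have hIcc : Finset.Icc 1 (p-1) = Finset.Ioc 0 (p-1) := by
      ext x; simp [Finset.mem_Icc, Finset.mem_Ioc]; omega
    rw [hIcc, Finset.sum_Ioc_consecutive _ (by omega : 0 ≤ m) (by omega : m ≤ p - 1)]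
  have hfirst : ∀ a ∈ Finset.Ioc 0 m, (p:ℝ) / (2 * min (a:ℝ) ((p:ℝ) - a))
      = (p:ℝ)/2 * (a:ℝ)⁻¹ := by
    intro a ha
    rw [Finset.mem_Ioc] at ha
    have h2a : 2 * a ≤ p - 1 := by omega
    have : min (a:ℝ) ((p:ℝ) - a) = (a:ℝ) := by
      apply min_eq_left
      have : (2*a:ℝ) ≤ (p:ℝ) - 1 := by
        have : ((2*a:ℕ):ℝ) ≤ ((p-1:ℕ):ℝ) := by exact_mod_cast h2a
        push_cast [Nat.cast_sub (by omega : 1 ≤ p)] at this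
        linarith
      linarith
    rw [this]
    field_simp
  have hrefl : ∑ a ∈ Finset.Ioc m (p-1), (p:ℝ) / (2 * min (a:ℝ) ((p:ℝ) - a))
      = ∑ b ∈ Finset.Ioc 0 m, (p:ℝ) / (2 * min ((p-b:ℕ):ℝ) ((p:ℝ) - ((p-b:ℕ):ℕ))) := by
    refine Finset.sum_nbij' (fun a => p - a) (fun b => p - b) ?_ ?_ ?_ ?_ ?_
    · intro a ha
      rw [Finset.mem_Ioc] at ha
      exact Finset.mem_Ioc.mpr ⟨by omega, by omega⟩
    · intro b hb
      rw [Finset.mem_Ioc] at hb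
      exact Finset.mem_Ioc.mpr ⟨by omega, by omega⟩
    · intro a ha
      rw [Finset.mem_Ioc] at ha
      omega
    · intro b hb
      rw [Finset.mem_Ioc] at hb
      omega
    · intro a ha
      rw [Finset.mem_Ioc] at ha
      have hxy : p - (p - a) = a := by omega
      rw [hxy]
  have hsecond : ∀ b ∈ Finset.Ioc 0 m, (p:ℝ) / (2 * min ((p-b:ℕ):ℝ) ((p:ℝ) - ((p-b:ℕ):ℕ)))
      = (p:ℝ)/2 * (b:ℝ)⁻¹ := by
    intro b hb
    rw [Finset.mem_Ioc] at hb
    have hbp : b ≤ p := by omega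
    have hc : ((p-b:ℕ):ℝ) = (p:ℝ) - b := by
      push_cast [Nat.cast_sub hbp]
      ring
    have h2b : 2 * b ≤ p - 1 := by omega
    have hble : (2*b:ℝ) ≤ (p:ℝ) - 1 := by
      have : ((2*b:ℕ):ℝ) ≤ ((p-1:ℕ):ℝ) := by exact_mod_cast h2b
      push_cast [Nat.cast_sub (by omega : 1 ≤ p)] at this
      linarith
    rw [hc]
    have : (p:ℝ) - ((p:ℝ) - b) = (b:ℝ) := by ring
    rw [this]
    have : min ((p:ℝ) - b) (b:ℝ) = (b:ℝ) := by
      apply min_eq_right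
      linarith
    rw [this]
    field_simp
  -- harmonic bound
  have hlogm : Real.log m ≤ Real.log p := by
    apply Real.log_le_log (by exact_mod_cast hm1)
    exact_mod_cast (by omega : m ≤ p)
  have hhsum : ∑ a ∈ Finset.Icc 1 m, (a:ℝ)⁻¹ ≤ 1 + Real.log p :=
    le_trans (aux_harmonic m) (by linarith)
  have htotal : ∑ a ∈ Finset.Icc 1 (p-1), (p:ℝ) / (2 * min (a:ℝ) ((p:ℝ) - a))
      ≤ (p:ℝ) * (1 + Real.log p) := by
    have hIcc2 : Finset.Ioc 0 m = Finset.Icc 1 m := by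
      ext x; simp [Finset.mem_Icc, Finset.mem_Ioc]; omega
    rw [hsplit, hrefl, Finset.sum_congr rfl hfirst, Finset.sum_congr rfl hsecond, hIcc2]
    simp only [← Finset.mul_sum]
    have hnn : 0 ≤ ∑ a ∈ Finset.Icc 1 m, (a:ℝ)⁻¹ :=
      Finset.sum_nonneg fun a _ => by positivity
    nlinarith [hhsum, hnn, hp0]
  -- conclude
  have hfin : Real.sqrt p * ‖S‖ ≤ (p:ℝ) * (1 + Real.log p) := by
    rw [← hτ, ← norm_mul]
    exact le_trans hbound (le_trans (le_of_eq hre) htotal)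
  have hps : (p:ℝ) = Real.sqrt p * Real.sqrt p := (Real.mul_self_sqrt hp0.le).symm
  have : Real.sqrt p * ‖S‖ ≤ Real.sqrt p * (Real.sqrt p * (1 + Real.log p)) := by
    rw [← mul_assoc, ← hps]
    exact hfin
  exact le_of_mul_le_mul_left this hsq

/-- For an odd prime `p` and a nontrivial Dirichlet character `χ` mod `p`,
`|L(2,χ)| ≤ |∑_{n=1}^{(p-1)/2} χ(n)/n²| + 24·√p·ln p/(p+1)²`,
where `L(2,χ) = ∑_{n ≥ 1} χ(n)/n²`. -/
theorem abs_L_two_le (p : ℕ) [Fact p.Prime] (hp : Odd p)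
    (χ : DirichletCharacter ℂ p) (hχ : χ ≠ 1) :
    ‖∑' n : ℕ, χ n / (n : ℂ) ^ 2‖ ≤
      ‖∑ n ∈ Finset.Icc 1 ((p - 1) / 2), χ n / (n : ℂ) ^ 2‖ +
        24 * Real.sqrt p * Real.log p / ((p : ℝ) + 1) ^ 2 := by
  have hpp : p.Prime := Fact.out
  have hp3 : 3 ≤ p := by
    rcases hpp.two_le.lt_or_eq with h | h
    · omega
    · exact absurd hp (by rw [← h]; decide)
  have hp0 : 0 < (p:ℝ) := by positivity
  set m := (p - 1) / 2 with hmdef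
  have hpm : p = 2 * m + 1 := by obtain ⟨k, hk⟩ := hp; omega
  have hm1 : 1 ≤ m := by omega
  set f : ℕ → ℂ := fun n => χ n / (n : ℂ) ^ 2 with hfdef
  -- summability
  have hnorm : ∀ n : ℕ, ‖f n‖ ≤ ((n:ℝ)^2)⁻¹ := by
    intro n
    rcases Nat.eq_zero_or_pos n with rfl | hn
    · simp [hfdef]
    · rw [hfdef]
      simp only [norm_div, norm_pow, Complex.norm_natCast]
      rw [div_eq_mul_inv]
      have h1 : ‖χ (n : ZMod p)‖ ≤ 1 := DirichletCharacter.norm_le_one χ _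
      have h2 : (0:ℝ) < ((n:ℝ)^2)⁻¹ := by positivity
      nlinarith
  have hsummable : Summable f := by
    apply Summable.of_norm
    apply Summable.of_nonneg_of_le (fun n => norm_nonneg _) hnorm
    simpa using Real.summable_one_div_nat_pow.mpr (by norm_num : 1 < 2)
  -- split
  have hsplit := Summable.sum_add_tsum_nat_add (m+1) hsummable
  have hhead : ∑ i ∈ Finset.range (m+1), f i = ∑ n ∈ Finset.Icc 1 m, f n := by
    symm
    apply Finset.sum_subset
    · intro x hx
      rw [Finset.mem_Icc] at hx
      exact Finset.mem_range.mpr (by omega)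
    · intro x hx hx'
      rw [Finset.mem_range] at hx
      rw [Finset.mem_Icc] at hx'
      have : x = 0 := by omega
      subst this
      simp [hfdef]
  -- tail bound
  set C := Real.sqrt p * (1 + Real.log p) with hCdef
  set b : ℕ → ℝ := fun n => ((n:ℝ)^2)⁻¹ with hbdef
  have htailK : ∀ N : ℕ, ‖∑ n ∈ Finset.Ioc m N, f n‖ ≤ C * b (m+1) := by
    intro N
    have hfb : ∀ n ∈ Finset.Ioc m N, f n = χ (n : ZMod p) * (b n : ℂ) := by
      intro n _
      rw [hfdef, hbdef]
      push_cast
      rw [div_eq_mul_inv]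
    rw [Finset.sum_congr rfl hfb]
    apply aux_abel_bound
    · intro n; rw [hbdef]; positivity
    · intro n hn
      rw [hbdef]
      have h1 : (1:ℝ) ≤ n := by exact_mod_cast (by omega : 1 ≤ n)
      apply inv_anti₀ (by positivity)
      push_cast
      nlinarith
    · exact fun N => aux_pv hp3 hp χ hχ m N
  have htail : ‖∑' i : ℕ, f (i + (m+1))‖ ≤ C * b (m+1) := by
    have hsum' : Summable (fun i => f (i + (m+1))) :=
      (summable_nat_add_iff (m+1)).mpr hsummable
    have ht := hsum'.hasSum.tendsto_sum_nat
    have ht2 : Filter.Tendsto (fun K => ‖∑ i ∈ Finset.range K, f (i + (m+1))‖)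
        Filter.atTop (nhds (‖∑' i : ℕ, f (i + (m+1))‖)) := by
      exact (continuous_norm.tendsto _).comp ht
    apply le_of_tendsto ht2
    filter_upwards with K
    have : ∑ i ∈ Finset.range K, f (i + (m+1)) = ∑ n ∈ Finset.Ioc m (m + K), f n := by
      rw [show Finset.Ioc m (m + K) = Finset.Ico (m+1) (m+1+K) by
        ext x; simp [Finset.mem_Ioc, Finset.mem_Ico]; omega]
      rw [Finset.sum_Ico_eq_sum_range]
      simp only [add_tsub_cancel_left]
      exact Finset.sum_congr rfl fun i _ => by rw [add_comm]
    rw [this]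
    exact htailK (m + K)
  -- numeric: C * b (m+1) ≤ 24 √p log p / (p+1)^2
  have hb1 : b (m+1) = 4 / ((p:ℝ)+1)^2 := by
    rw [hbdef]
    have : ((m:ℝ) + 1) = ((p:ℝ) + 1)/2 := by
      have : (p:ℝ) = 2*m + 1 := by exact_mod_cast hpm
      linarith
    push_cast
    rw [this]
    field_simp
    ring
  have hlog1 : 1 ≤ Real.log p := by
    apply le_of_lt
    rw [Real.lt_log_iff_exp_lt hp0]
    calc Real.exp 1 < 2.7182818286 := Real.exp_one_lt_d9
      _ ≤ 3 := by norm_num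
      _ ≤ p := by exact_mod_cast hp3
  have hnum : C * b (m+1) ≤ 24 * Real.sqrt p * Real.log p / ((p:ℝ) + 1) ^ 2 := by
    rw [hb1, hCdef]
    have hsq : 0 ≤ Real.sqrt p := Real.sqrt_nonneg _
    have h1 : 1 + Real.log p ≤ 6 * Real.log p := by linarith
    have h2 : Real.sqrt p * (1 + Real.log p) ≤ Real.sqrt p * (6 * Real.log p) :=
      mul_le_mul_of_nonneg_left h1 hsq
    have hD : (0:ℝ) < ((p:ℝ)+1)^2 := by positivity
    rw [show Real.sqrt p * (1 + Real.log p) * (4/(((p:ℝ)+1)^2))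
        = (Real.sqrt p * (1 + Real.log p) * 4)/(((p:ℝ)+1)^2) by ring]
    rw [div_le_div_iff₀ hD hD]
    nlinarith [mul_le_mul_of_nonneg_right h2 (le_of_lt hD)]
  -- final combination
  rw [← hsplit, hhead]
  calc ‖∑ n ∈ Finset.Icc 1 m, f n + ∑' i : ℕ, f (i + (m+1))‖
      ≤ ‖∑ n ∈ Finset.Icc 1 m, f n‖ + ‖∑' i : ℕ, f (i + (m+1))‖ :=
        norm_add_le _ _
    _ ≤ ‖∑ n ∈ Finset.Icc 1 m, f n‖ + 24 * Real.sqrt p * Real.log p / ((p:ℝ) + 1) ^ 2 := by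
        gcongr
        exact le_trans htail hnum
end

section
/- Let p be an odd prime and ω the Teichmüller character mod p (values in ℤ_p). For 1 ≤ j ≤ (p-3)/2 with 4j+2 not divisible by p-1, we have B'_{2,ω^{4j}} := p·Σ_{a=1}^{p-1} ω(a)^{4j}·B₂(a/p) ≡ (1-4j)·b_{4j+2} + 4j·b_{4j+1+p} mod p in ℤ_p, where B₂(x) = x² - x + 1/6 is the second Bernoulli polynomial and b_n are Bernoulli numbers. -/
open Finset

section Helpers

variable {p : ℕ} [hpf : Fact p.Prime]



lemma nadd {x y : ℚ_[p]} {c : ℝ} (hx : ‖x‖ ≤ c) (hy : ‖y‖ ≤ c) : ‖x + y‖ ≤ c :=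
  le_trans (Padic.nonarchimedean x y) (max_le hx hy)

lemma nsub {x y : ℚ_[p]} {c : ℝ} (hx : ‖x‖ ≤ c) (hy : ‖y‖ ≤ c) : ‖x - y‖ ≤ c := by
  rw [sub_eq_add_neg]; exact nadd hx (by simpa using hy)

lemma ultra_sum {ι : Type*} {s : Finset ι} {f : ι → ℚ_[p]} {c : ℝ} (hc : 0 ≤ c)
    (h : ∀ i ∈ s, ‖f i‖ ≤ c) : ‖∑ i ∈ s, f i‖ ≤ c := by
  induction s using Finset.cons_induction with
  | empty => simpa using hc
  | cons a s ha ih =>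
      rw [Finset.sum_cons]
      exact nadd (h a (Finset.mem_cons_self a s)) (ih fun i hi => h i (Finset.mem_cons.mpr (Or.inr hi)))

lemma norm_nat_le_one (k : ℕ) : ‖(k : ℚ_[p])‖ ≤ 1 := by
  have := Padic.norm_int_le_one (p := p) (k : ℤ)
  simpa using this

lemma norm_pow_sub_pow_le (x y : ℚ_[p]) (hx : ‖x‖ ≤ 1) (hy : ‖y‖ ≤ 1) (k : ℕ) :
    ‖x ^ k - y ^ k‖ ≤ ‖x - y‖ := by
  induction k with
  | zero => simp
  | succ k ih =>
    have h : x ^ (k+1) - y ^ (k+1) = x * (x ^ k - y ^ k) + (x - y) * y ^ k := by ring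
    rw [h]
    refine nadd ?_ ?_
    · calc ‖x * (x ^ k - y ^ k)‖ = ‖x‖ * ‖x ^ k - y ^ k‖ := norm_mul _ _
        _ ≤ 1 * ‖x - y‖ := mul_le_mul hx ih (norm_nonneg _) zero_le_one
        _ = ‖x - y‖ := one_mul _
    · calc ‖(x - y) * y ^ k‖ = ‖x - y‖ * ‖y‖ ^ k := by rw [norm_mul, norm_pow]
        _ ≤ ‖x - y‖ * 1 := by
            exact mul_le_mul_of_nonneg_left (pow_le_one₀ (norm_nonneg _) hy) (norm_nonneg _)
        _ = ‖x - y‖ := mul_one _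



-- H3
lemma norm_pow_p_sub (x y : ℚ_[p]) (hx : ‖x‖ ≤ 1) (hy : ‖y‖ ≤ 1)
    (hxy : ‖x - y‖ ≤ (p:ℝ)⁻¹) : ‖x ^ p - y ^ p‖ ≤ (p:ℝ)⁻¹ * (p:ℝ)⁻¹ := by
  have hG : ‖∑ i ∈ range p, x ^ i * y ^ (p - 1 - i)‖ ≤ (p:ℝ)⁻¹ := by
    have hsplit : ∑ i ∈ range p, x ^ i * y ^ (p - 1 - i)
        = (∑ i ∈ range p, (x ^ i - y ^ i) * y ^ (p - 1 - i)) + (p : ℚ_[p]) * y ^ (p-1) := by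
      have hterm : ∀ i ∈ range p, x ^ i * y ^ (p - 1 - i)
          = (x ^ i - y ^ i) * y ^ (p - 1 - i) + y ^ (p-1) := by
        intro i hi
        have hip : i + (p - 1 - i) = p - 1 := by
          have := Finset.mem_range.mp hi
          omega
        rw [sub_mul, ← pow_add, hip]; ring
      rw [Finset.sum_congr rfl hterm, Finset.sum_add_distrib, Finset.sum_const, card_range,
        nsmul_eq_mul]
    rw [hsplit]
    refine nadd (ultra_sum (by positivity) ?_) ?_
    · intro i hi
      calc ‖(x ^ i - y ^ i) * y ^ (p - 1 - i)‖ = ‖x ^ i - y ^ i‖ * ‖y‖ ^ (p-1-i) := by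
            rw [norm_mul, norm_pow]
        _ ≤ (p:ℝ)⁻¹ * 1 := mul_le_mul (le_trans (norm_pow_sub_pow_le x y hx hy i) hxy)
            (pow_le_one₀ (norm_nonneg _) hy) (by positivity) (by positivity)
        _ = (p:ℝ)⁻¹ := mul_one _
    · calc ‖(p : ℚ_[p]) * y ^ (p-1)‖ = ‖(p : ℚ_[p])‖ * ‖y‖ ^ (p-1) := by rw [norm_mul, norm_pow]
        _ ≤ (p:ℝ)⁻¹ * 1 := by
            rw [Padic.norm_p]
            exact mul_le_mul_of_nonneg_left (pow_le_one₀ (norm_nonneg _) hy) (by positivity)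
        _ = (p:ℝ)⁻¹ := mul_one _
  have hfac := geom_sum₂_mul x y p
  rw [← hfac, norm_mul]
  exact mul_le_mul hG hxy (norm_nonneg _) (by positivity)



-- H4
lemma norm_pow_sub_linear (y : ℚ_[p]) (hy : ‖y - 1‖ ≤ 1) (k : ℕ) :
    ‖y ^ k - 1 - k * (y - 1)‖ ≤ ‖y - 1‖ ^ 2 := by
  have hy1 : ‖y‖ ≤ 1 := by
    have : y = (y - 1) + 1 := by ring
    rw [this]
    exact nadd hy (by simp)
  induction k with
  | zero => simp
  | succ k ih =>
    have h : y ^ (k+1) - 1 - ((k:ℕ)+1 : ℚ_[p]) * (y - 1)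
        = y * (y ^ k - 1 - k * (y - 1)) + k * (y - 1) ^ 2 := by ring
    have h2 : ((k+1 : ℕ) : ℚ_[p]) = ((k:ℕ) : ℚ_[p]) + 1 := by push_cast; ring
    rw [h2, h]
    refine nadd ?_ ?_
    · calc ‖y * (y ^ k - 1 - k * (y - 1))‖ = ‖y‖ * ‖y ^ k - 1 - k * (y - 1)‖ := norm_mul _ _
        _ ≤ 1 * ‖y - 1‖ ^ 2 := mul_le_mul hy1 ih (norm_nonneg _) zero_le_one
        _ = ‖y - 1‖ ^ 2 := one_mul _
    · calc ‖(k : ℚ_[p]) * (y - 1) ^ 2‖ = ‖(k : ℚ_[p])‖ * ‖y - 1‖ ^ 2 := by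
            rw [norm_mul, norm_pow]
        _ ≤ 1 * ‖y - 1‖ ^ 2 := mul_le_mul_of_nonneg_right (norm_nat_le_one k) (by positivity)
        _ = ‖y - 1‖ ^ 2 := one_mul _

-- norm of nat cast, exact value
lemma norm_nat_eq {m : ℕ} (hm : m ≠ 0) :
    ‖(m : ℚ_[p])‖ = ((p:ℝ)⁻¹) ^ (m.factorization p) := by
  have hp := hpf.out
  set v := m.factorization p with hv
  have hdecomp : p ^ v * (m / p ^ v) = m := Nat.ordProj_mul_ordCompl_eq_self m p
  set c := m / p ^ v with hc
  have hcd : ¬ (p ∣ c) := Nat.not_dvd_ordCompl hp hm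
  have hnc : ‖(c : ℚ_[p])‖ = 1 := by
    have hle : ‖((c : ℤ) : ℚ_[p])‖ ≤ 1 := Padic.norm_int_le_one _
    have hlt : ¬ ‖((c : ℤ) : ℚ_[p])‖ < 1 := by
      rw [Padic.norm_intCast_lt_one_iff]
      exact_mod_cast hcd
    have : ‖((c : ℤ) : ℚ_[p])‖ = 1 := le_antisymm hle (not_lt.mp hlt)
    simpa using this
  calc ‖(m : ℚ_[p])‖ = ‖((p ^ v * c : ℕ) : ℚ_[p])‖ := by rw [hdecomp]
    _ = ‖(p:ℚ_[p]) ^ v‖ * ‖(c : ℚ_[p])‖ := by push_cast; rw [norm_mul]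
    _ = ((p:ℝ)⁻¹) ^ v := by
        rw [hnc, mul_one, norm_pow, Padic.norm_p]

lemma five_pow_ge {v : ℕ} (hv : 1 ≤ v) : v + 3 ≤ 5 ^ v := by
  induction v with
  | zero => omega
  | succ v ih =>
    rcases Nat.eq_zero_or_pos v with rfl | hv'
    · norm_num
    · have := ih hv'
      have h5 : 5 ^ v + 1 ≤ 5 ^ (v+1) := by
        have : 1 ≤ 5 ^ v := Nat.one_le_pow _ _ (by norm_num)
        calc 5 ^ v + 1 ≤ 5 ^ v + 5 ^ v := by omega
          _ ≤ 5 ^ (v+1) := by rw [pow_succ]; omega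
      omega

-- H5
lemma norm_p_pow_div_le (hp5 : 5 ≤ p) {m : ℕ} (hm : m ≠ 0) :
    ‖(p : ℚ_[p]) ^ m / m‖ ≤ ((p:ℝ)⁻¹) ^ (min m 3) := by
  have hp := hpf.out
  have hppos : (0:ℝ) < p := by positivity
  have hpinv : (0:ℝ) < (p:ℝ)⁻¹ := by positivity
  have hpinv1 : (p:ℝ)⁻¹ ≤ 1 := by
    rw [inv_le_one_iff₀]; right; exact_mod_cast hp.one_lt.le
  set v := m.factorization p with hv
  have hvm : v + min m 3 ≤ m := by
    rcases Nat.eq_zero_or_pos v with h | h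
    · have := min_le_left m 3; omega
    · have h1 : p ^ v ≤ m := Nat.le_of_dvd (Nat.pos_of_ne_zero hm) (Nat.ordProj_dvd m p)
      have h2 : (5:ℕ) ^ v ≤ p ^ v := Nat.pow_le_pow_left hp5 v
      have h3 := five_pow_ge h
      have := min_le_right m 3
      omega
  rw [norm_div, norm_pow, Padic.norm_p, norm_nat_eq hm, ← hv]
  rw [div_le_iff₀ (by positivity)]
  rw [← pow_add]
  exact pow_le_pow_of_le_one hpinv.le hpinv1 (by omega)



-- Faulhaber in ℚ_[p] with the choose identity rewrite
lemma faulhaber_cast (n : ℕ) :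
    (∑ a ∈ range p, (a : ℚ_[p]) ^ n) =
      ∑ i ∈ range (n+1),
        (bernoulli i : ℚ_[p]) * ((n.choose i : ℕ) : ℚ_[p]) * (p:ℚ_[p]) ^ (n+1-i)
          / ((n+1-i : ℕ) : ℚ_[p]) := by
  have h := _root_.sum_range_pow p n
  have h2 : ((∑ k ∈ range p, (k:ℚ)^n : ℚ) : ℚ_[p])
      = ((∑ i ∈ range (n+1), bernoulli i * ((n+1).choose i : ℕ) * (p:ℚ)^(n+1-i)/((n:ℚ)+1) : ℚ) : ℚ_[p]) := by
    exact_mod_cast congrArg (fun q : ℚ => (q : ℚ_[p])) h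
  push_cast at h2
  rw [h2]
  refine Finset.sum_congr rfl ?_
  intro i hi
  have hin : i ≤ n := by have := Finset.mem_range.mp hi; omega
  have hA : (((n:ℚ_[p])) + 1) ≠ 0 := by
    have : ((n+1 : ℕ) : ℚ_[p]) ≠ 0 := Nat.cast_ne_zero.mpr (by omega)
    push_cast at this; exact this
  have hB : ((n+1-i : ℕ) : ℚ_[p]) ≠ 0 := Nat.cast_ne_zero.mpr (by omega)
  have hid : ((n.choose i : ℕ) : ℚ_[p]) * ((n:ℚ_[p]) + 1)
      = (((n+1).choose i : ℕ) : ℚ_[p]) * ((n+1-i : ℕ) : ℚ_[p]) := by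
    have := Nat.choose_mul_succ_eq n i
    have h3 : ((n.choose i * (n+1) : ℕ) : ℚ_[p]) = (((n+1).choose i * (n+1-i) : ℕ) : ℚ_[p]) := by
      rw [this]
    push_cast [Nat.cast_sub] at h3
    push_cast
    exact h3
  rw [div_eq_div_iff hA hB]
  linear_combination (-(bernoulli i : ℚ_[p]) * (p:ℚ_[p]) ^ (n+1-i)) * hid



-- weak von Staudt–Clausen
lemma bernoulli_norm_le (hp5 : 5 ≤ p) (n : ℕ) : ‖(bernoulli n : ℚ_[p])‖ ≤ (p:ℝ) := by
  induction n using Nat.strong_induction_on with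
  | _ n ih =>
    have hppos : (0:ℝ) < p := by positivity
    rcases Nat.eq_zero_or_pos n with rfl | hn
    · simp only [bernoulli_zero, Rat.cast_one, norm_one]
      exact_mod_cast (by omega : 1 ≤ p)
    · have hF := faulhaber_cast (p := p) n
      rw [Finset.sum_range_succ] at hF
      have hlast : (bernoulli n : ℚ_[p]) * ((n.choose n : ℕ) : ℚ_[p]) * (p:ℚ_[p]) ^ (n+1-n)
          / ((n+1-n : ℕ) : ℚ_[p]) = (bernoulli n : ℚ_[p]) * p := by
        have h1 : n + 1 - n = 1 := by omega
        rw [h1, Nat.choose_self]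
        push_cast
        field_simp
      rw [hlast] at hF
      have hp0 : (p : ℚ_[p]) ≠ 0 := Nat.cast_ne_zero.mpr (by omega)
      have hbn : (bernoulli n : ℚ_[p])
          = ((∑ a ∈ range p, (a : ℚ_[p]) ^ n)
            - ∑ i ∈ range n, (bernoulli i : ℚ_[p]) * ((n.choose i : ℕ) : ℚ_[p]) * (p:ℚ_[p]) ^ (n+1-i)
              / ((n+1-i : ℕ) : ℚ_[p])) / p := by
        rw [eq_div_iff hp0]
        linear_combination -hF
      rw [hbn, norm_div, Padic.norm_p]
      rw [div_eq_mul_inv, inv_inv]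
      have h1 : ‖(∑ a ∈ range p, (a : ℚ_[p]) ^ n)
          - ∑ i ∈ range n, (bernoulli i : ℚ_[p]) * ((n.choose i : ℕ) : ℚ_[p]) * (p:ℚ_[p]) ^ (n+1-i)
            / ((n+1-i : ℕ) : ℚ_[p])‖ ≤ 1 := by
        refine nsub (ultra_sum zero_le_one ?_) (ultra_sum zero_le_one ?_)
        · intro a _
          rw [norm_pow]
          exact pow_le_one₀ (norm_nonneg _) (norm_nat_le_one a)
        · intro i hi
          have him : i < n := Finset.mem_range.mp hi
          have hm0 : n + 1 - i ≠ 0 := by omega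
          rw [mul_div_assoc, mul_assoc, norm_mul, norm_mul]
          have hb := ih i him
          have hc := norm_nat_le_one (p := p) (n.choose i)
          have hd : ‖(p:ℚ_[p]) ^ (n+1-i) / ((n+1-i : ℕ) : ℚ_[p])‖ ≤ (p:ℝ)⁻¹ := by
            refine le_trans (norm_p_pow_div_le hp5 hm0) ?_
            have : 1 ≤ min (n+1-i) 3 := by omega
            calc ((p:ℝ)⁻¹) ^ (min (n+1-i) 3) ≤ ((p:ℝ)⁻¹) ^ 1 :=
                pow_le_pow_of_le_one (by positivity) (by
                  rw [inv_le_one_iff₀]; right; exact_mod_cast (by omega : 1 ≤ p)) this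
              _ = (p:ℝ)⁻¹ := pow_one _
          calc ‖(bernoulli i : ℚ_[p])‖ * (‖((n.choose i : ℕ) : ℚ_[p])‖ * ‖(p:ℚ_[p]) ^ (n+1-i) / ((n+1-i : ℕ) : ℚ_[p])‖)
              ≤ (p:ℝ) * (1 * (p:ℝ)⁻¹) := by
                refine mul_le_mul hb ?_ (by positivity) hppos.le
                exact mul_le_mul hc hd (norm_nonneg _) zero_le_one
            _ = 1 := by field_simp
      calc ‖(∑ a ∈ range p, (a : ℚ_[p]) ^ n)
          - ∑ i ∈ range n, (bernoulli i : ℚ_[p]) * ((n.choose i : ℕ) : ℚ_[p]) * (p:ℚ_[p]) ^ (n+1-i)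
            / ((n+1-i : ℕ) : ℚ_[p])‖ * (p:ℝ) ≤ 1 * p := by
            exact mul_le_mul_of_nonneg_right h1 hppos.le
        _ = p := one_mul _



lemma bernoulli_odd_zero {n : ℕ} (hodd : Odd n) (hn : 1 < n) : bernoulli n = 0 := by
  rw [bernoulli_eq_bernoulli'_of_ne_one (by omega)]
  exact bernoulli'_eq_zero_of_odd hodd hn

lemma pinv_le_one (hp5 : 5 ≤ p) : (p:ℝ)⁻¹ ≤ 1 := by
  rw [inv_le_one_iff₀]; right; exact_mod_cast (by omega : 1 ≤ p)

-- generic bound for a Faulhaber term, i ranging with m = n+1-i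
lemma term_norm_le (hp5 : 5 ≤ p) {n i : ℕ} (hin : i ≤ n) :
    ‖(bernoulli i : ℚ_[p]) * ((n.choose i : ℕ) : ℚ_[p]) * (p:ℚ_[p]) ^ (n+1-i)
      / ((n+1-i : ℕ) : ℚ_[p])‖ ≤ (p:ℝ) * ((p:ℝ)⁻¹) ^ (min (n+1-i) 3) := by
  have hppos : (0:ℝ) < p := by positivity
  rw [mul_div_assoc, mul_assoc, norm_mul, norm_mul]
  refine mul_le_mul (bernoulli_norm_le hp5 i) ?_ (by positivity) hppos.le
  calc ‖((n.choose i : ℕ) : ℚ_[p])‖ * ‖(p:ℚ_[p]) ^ (n+1-i) / ((n+1-i : ℕ) : ℚ_[p])‖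
      ≤ 1 * (((p:ℝ)⁻¹) ^ (min (n+1-i) 3)) :=
        mul_le_mul (norm_nat_le_one _) (norm_p_pow_div_le hp5 (by omega)) (norm_nonneg _)
          zero_le_one
    _ = ((p:ℝ)⁻¹) ^ (min (n+1-i) 3) := one_mul _

-- sum of odd powers
lemma sum_pow_odd (hp5 : 5 ≤ p) {n : ℕ} (hb : bernoulli n = 0) :
    ‖∑ a ∈ range p, (a : ℚ_[p]) ^ n‖ ≤ (p:ℝ)⁻¹ := by
  have hppos : (0:ℝ) < p := by positivity
  rw [faulhaber_cast]
  refine ultra_sum (by positivity) ?_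
  intro i hi
  have hin : i ≤ n := by have := Finset.mem_range.mp hi; omega
  rcases eq_or_lt_of_le hin with rfl | hlt
  · simp [hb]
  · refine le_trans (term_norm_le hp5 hin) ?_
    have h2 : 2 ≤ min (n+1-i) 3 := by omega
    calc (p:ℝ) * ((p:ℝ)⁻¹) ^ (min (n+1-i) 3) ≤ (p:ℝ) * ((p:ℝ)⁻¹) ^ 2 := by
          refine mul_le_mul_of_nonneg_left ?_ hppos.le
          exact pow_le_pow_of_le_one (by positivity) (pinv_le_one hp5) h2
      _ = (p:ℝ)⁻¹ := by field_simp [pow_two]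

-- (S_n / p) ≈ bernoulli n for even n ≥ 2
lemma sum_pow_div_p (hp5 : 5 ≤ p) {n : ℕ} (hn : 2 ≤ n) (hb : bernoulli (n-1) = 0) :
    ‖(∑ a ∈ range p, (a : ℚ_[p]) ^ n) / p - (bernoulli n : ℚ_[p])‖ ≤ (p:ℝ)⁻¹ := by
  have hppos : (0:ℝ) < p := by positivity
  have hp0 : (p : ℚ_[p]) ≠ 0 := Nat.cast_ne_zero.mpr (by omega)
  have hF := faulhaber_cast (p := p) n
  rw [Finset.sum_range_succ] at hF
  have hlast : (bernoulli n : ℚ_[p]) * ((n.choose n : ℕ) : ℚ_[p]) * (p:ℚ_[p]) ^ (n+1-n)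
      / ((n+1-n : ℕ) : ℚ_[p]) = (bernoulli n : ℚ_[p]) * p := by
    have h1 : n + 1 - n = 1 := by omega
    rw [h1, Nat.choose_self]
    push_cast
    field_simp
  rw [hlast] at hF
  have key : (∑ a ∈ range p, (a : ℚ_[p]) ^ n) / p - (bernoulli n : ℚ_[p])
      = (∑ i ∈ range n, (bernoulli i : ℚ_[p]) * ((n.choose i : ℕ) : ℚ_[p]) * (p:ℚ_[p]) ^ (n+1-i)
          / ((n+1-i : ℕ) : ℚ_[p])) / p := by
    rw [div_sub' hp0, hF]  -- check
    ring
  rw [key, norm_div, Padic.norm_p, div_eq_mul_inv, inv_inv]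
  have hsum : ‖∑ i ∈ range n, (bernoulli i : ℚ_[p]) * ((n.choose i : ℕ) : ℚ_[p]) * (p:ℚ_[p]) ^ (n+1-i)
      / ((n+1-i : ℕ) : ℚ_[p])‖ ≤ (p:ℝ)⁻¹ * (p:ℝ)⁻¹ := by
    refine ultra_sum (by positivity) ?_
    intro i hi
    have hin : i < n := Finset.mem_range.mp hi
    rcases eq_or_lt_of_le (by omega : i ≤ n - 1) with heq | hlt
    · have : i = n - 1 := heq
      subst this
      rw [hb]
      simp [hppos.le]
      positivity
    · refine le_trans (term_norm_le hp5 (by omega)) ?_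
      have h3 : min (n+1-i) 3 = 3 := by omega
      rw [h3]
      have : (p:ℝ) * ((p:ℝ)⁻¹) ^ 3 = (p:ℝ)⁻¹ * (p:ℝ)⁻¹ := by field_simp
      rw [this]
  calc ‖∑ i ∈ range n, (bernoulli i : ℚ_[p]) * ((n.choose i : ℕ) : ℚ_[p]) * (p:ℚ_[p]) ^ (n+1-i)
      / ((n+1-i : ℕ) : ℚ_[p])‖ * (p:ℝ) ≤ ((p:ℝ)⁻¹ * (p:ℝ)⁻¹) * p :=
        mul_le_mul_of_nonneg_right hsum hppos.le
    _ = (p:ℝ)⁻¹ := by field_simp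



lemma norm_fermat {a : ℕ} (ha1 : 1 ≤ a) (ha2 : a ≤ p - 1) :
    ‖(a:ℚ_[p])^(p-1) - 1‖ ≤ (p:ℝ)⁻¹ := by
  have hp2 := hpf.out.two_le
  have hnd : ¬ p ∣ a := by
    intro h
    have := Nat.le_of_dvd (by omega) h
    omega
  have hz : ((a : ZMod p)) ≠ 0 := by
    rw [Ne, ZMod.natCast_eq_zero_iff]
    exact hnd
  have hF : ((a : ZMod p)) ^ (p - 1) = 1 := ZMod.pow_card_sub_one_eq_one hz
  have hdvd : (p : ℤ) ∣ ((a:ℤ) ^ (p-1) - 1) := by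
    rw [← ZMod.intCast_zmod_eq_zero_iff_dvd]
    push_cast
    rw [hF]
    ring
  have := (Padic.norm_int_le_pow_iff_dvd ((a:ℤ) ^ (p-1) - 1) 1).mpr (by simpa using hdvd)
  have heq : (((a:ℤ) ^ (p-1) - 1 : ℤ) : ℚ_[p]) = (a:ℚ_[p])^(p-1) - 1 := by push_cast; ring
  rw [heq] at this
  refine le_trans this (le_of_eq (by norm_num))

lemma sum_range_eq_Icc {f : ℕ → ℚ_[p]} (hf : f 0 = 0) :
    ∑ a ∈ range p, f a = ∑ a ∈ Icc 1 (p-1), f a := by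
  have hp1 : 0 < p := hpf.out.pos
  have hIco : Finset.Ico 1 p = Finset.Icc 1 (p-1) := by
    rw [← Finset.Ico_add_one_right_eq_Icc]
    congr 1
    omega
  rw [range_eq_Ico, Finset.sum_eq_sum_Ico_succ_bot hp1, hf, zero_add, hIco]

lemma div_p_norm {x : ℚ_[p]} (h : ‖x‖ ≤ (p:ℝ)⁻¹ * (p:ℝ)⁻¹) : ‖x / p‖ ≤ (p:ℝ)⁻¹ := by
  have hppos : (0:ℝ) < p := by exact_mod_cast hpf.out.pos
  rw [norm_div, Padic.norm_p, div_eq_mul_inv, inv_inv]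
  calc ‖x‖ * p ≤ ((p:ℝ)⁻¹ * (p:ℝ)⁻¹) * p := mul_le_mul_of_nonneg_right h hppos.le
    _ = (p:ℝ)⁻¹ := by field_simp

end Helpers

/-- Let `p` be an odd prime and `ω` the Teichmüller character mod `p` (characterized by
`ω(a)^p = ω(a)` and `ω(a) ≡ a mod p`).  For `1 ≤ j ≤ (p-3)/2` with `(p-1) ∤ (4j+2)`,
`B'_{2,ω^{4j}} := p·∑_{a=1}^{p-1} ω(a)^{4j}·B₂(a/p)` satisfies
`B'_{2,ω^{4j}} ≡ (1-4j)·b_{4j+2} + 4j·b_{4j+1+p} (mod p)` in `ℤ_p`, where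
`B₂(x) = x² - x + 1/6` and `b_n` are the Bernoulli numbers. -/
theorem Bprime_two_congruence (p : ℕ) [Fact p.Prime] (hp : Odd p)
    (ω : ℕ → ℤ_[p])
    (hω : ∀ a : ℕ, 1 ≤ a → a ≤ p - 1 → ω a ^ p = ω a ∧ ‖((ω a : ℚ_[p]) - a)‖ ≤ (p : ℝ)⁻¹)
    (j : ℕ) (hj1 : 1 ≤ j) (hj2 : j ≤ (p - 3) / 2) (hdvd : ¬ (p - 1) ∣ (4 * j + 2)) :
    ‖(p : ℚ_[p]) * ∑ a ∈ Finset.Icc 1 (p - 1),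
        ((ω a : ℚ_[p])) ^ (4 * j) *
          (((a : ℚ_[p]) / p) ^ 2 - (a : ℚ_[p]) / p + 1 / 6) -
      (((1 - 4 * (j : ℚ)) * bernoulli (4 * j + 2) +
        4 * (j : ℚ) * bernoulli (4 * j + 1 + p) : ℚ) : ℚ_[p])‖ ≤ (p : ℝ)⁻¹ := by
  have hpprime : p.Prime := Fact.out
  have hp5 : 5 ≤ p := by
    have h1 : 1 ≤ (p - 3) / 2 := le_trans hj1 hj2
    have hp2 := hpprime.two_le
    omega
  have hppos : (0:ℝ) < p := by positivity
  have hp0 : (p:ℚ_[p]) ≠ 0 := Nat.cast_ne_zero.mpr (by omega)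
  have hpinv : (0:ℝ) ≤ (p:ℝ)⁻¹ := by positivity
  have hjp : 1 ≤ j * p := Nat.mul_pos hj1 (by omega)
  -- element-wise facts
  have hωnorm : ∀ a ∈ Finset.Icc 1 (p-1), ‖(ω a : ℚ_[p])‖ ≤ 1 := by
    intro a _
    rw [← PadicInt.norm_def]
    exact PadicInt.norm_le_one _
  have hωp : ∀ a ∈ Finset.Icc 1 (p-1), ‖(ω a : ℚ_[p]) - ((a:ℚ_[p]))^p‖ ≤ (p:ℝ)⁻¹ * (p:ℝ)⁻¹ := by
    intro a ha
    obtain ⟨ha1, ha2⟩ := Finset.mem_Icc.mp ha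
    obtain ⟨hfix, hcong⟩ := hω a ha1 ha2
    have hx : ((ω a : ℚ_[p]))^p = (ω a : ℚ_[p]) := by exact_mod_cast congrArg (fun z : ℤ_[p] => (z : ℚ_[p])) hfix
    calc ‖(ω a : ℚ_[p]) - ((a:ℚ_[p]))^p‖ = ‖((ω a : ℚ_[p]))^p - ((a:ℚ_[p]))^p‖ := by rw [hx]
      _ ≤ (p:ℝ)⁻¹ * (p:ℝ)⁻¹ := norm_pow_p_sub _ _ (hωnorm a ha) (norm_nat_le_one a) hcong
  -- bernoulli vanishing facts
  have hb1 : bernoulli (4*j*p+2-1) = 0 := by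
    have h2 : 4*j*p+2-1 = 4*(j*p)+1 := by
      have : 4*j*p = 4*(j*p) := by ring
      omega
    rw [h2]
    exact bernoulli_odd_zero ⟨2*(j*p), by ring⟩ (by omega)
  have hb2 : bernoulli (4*j+2-1) = 0 := by
    have h2 : 4*j+2-1 = 4*j+1 := by omega
    rw [h2]
    exact bernoulli_odd_zero ⟨2*j, by ring⟩ (by omega)
  have hb3 : bernoulli (4*j+1+p-1) = 0 := by
    have h2 : 4*j+1+p-1 = 4*j+p := by omega
    rw [h2]
    obtain ⟨m, hm⟩ := hp
    exact bernoulli_odd_zero ⟨2*j+m, by omega⟩ (by omega)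
  have hb4 : bernoulli (4*j+1) = 0 := bernoulli_odd_zero ⟨2*j, by ring⟩ (by omega)
  -- conversions range → Icc
  have hconv : ∀ n : ℕ, n ≠ 0 →
      (∑ a ∈ range p, (a : ℚ_[p]) ^ n) = ∑ a ∈ Finset.Icc 1 (p-1), (a : ℚ_[p]) ^ n := by
    intro n hn
    exact sum_range_eq_Icc (by rw [Nat.cast_zero, zero_pow hn])
  -- main S/p ≈ bernoulli estimates over Icc
  have E1 : ‖(∑ a ∈ Finset.Icc 1 (p-1), (a:ℚ_[p])^(4*j*p+2))/p - (bernoulli (4*j*p+2) : ℚ_[p])‖ ≤ (p:ℝ)⁻¹ := by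
    rw [← hconv _ (by omega)]
    exact sum_pow_div_p hp5 (by omega) hb1
  have E2 : ‖(∑ a ∈ Finset.Icc 1 (p-1), (a:ℚ_[p])^(4*j+2))/p - (bernoulli (4*j+2) : ℚ_[p])‖ ≤ (p:ℝ)⁻¹ := by
    rw [← hconv _ (by omega)]
    exact sum_pow_div_p hp5 (by omega) hb2
  have E3 : ‖(∑ a ∈ Finset.Icc 1 (p-1), (a:ℚ_[p])^(4*j+1+p))/p - (bernoulli (4*j+1+p) : ℚ_[p])‖ ≤ (p:ℝ)⁻¹ := by
    rw [← hconv _ (by omega)]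
    exact sum_pow_div_p hp5 (by omega) hb3
  have P5 : ‖∑ a ∈ Finset.Icc 1 (p-1), (a:ℚ_[p])^(4*j+1)‖ ≤ (p:ℝ)⁻¹ := by
    rw [← hconv _ (by omega)]
    exact sum_pow_odd hp5 hb4
  -- P1
  have P1 : ‖(∑ a ∈ Finset.Icc 1 (p-1), (ω a : ℚ_[p])^(4*j) * ((a:ℚ_[p])^2 / p))
      - (∑ a ∈ Finset.Icc 1 (p-1), (a:ℚ_[p])^(4*j*p+2))/p‖ ≤ (p:ℝ)⁻¹ := by
    rw [Finset.sum_div, ← Finset.sum_sub_distrib]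
    refine ultra_sum hpinv ?_
    intro a ha
    have hsplit : (a:ℚ_[p])^(4*j*p+2) = ((a:ℚ_[p])^p)^(4*j) * (a:ℚ_[p])^2 := by
      rw [← pow_mul, ← pow_add]
      congr 1
      ring
    have heq : (ω a:ℚ_[p])^(4*j) * ((a:ℚ_[p])^2/p) - (a:ℚ_[p])^(4*j*p+2) / p
        = ((ω a:ℚ_[p])^(4*j) - ((a:ℚ_[p])^p)^(4*j)) * (a:ℚ_[p])^2 / p := by
      rw [hsplit]; ring
    rw [heq]
    refine div_p_norm ?_
    calc ‖((ω a:ℚ_[p])^(4*j) - ((a:ℚ_[p])^p)^(4*j)) * (a:ℚ_[p])^2‖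
        = ‖(ω a:ℚ_[p])^(4*j) - ((a:ℚ_[p])^p)^(4*j)‖ * ‖(a:ℚ_[p])‖^2 := by
          rw [norm_mul, norm_pow]
      _ ≤ ((p:ℝ)⁻¹ * (p:ℝ)⁻¹) * 1 := by
          refine mul_le_mul ?_ (pow_le_one₀ (norm_nonneg _) (norm_nat_le_one a)) (by positivity)
            (by positivity)
          have hap : ‖(a:ℚ_[p])^p‖ ≤ 1 := by
            rw [norm_pow]
            exact pow_le_one₀ (norm_nonneg _) (norm_nat_le_one a)
          refine le_trans (norm_pow_sub_pow_le _ _ (hωnorm a ha) hap (4*j)) (hωp a ha)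
      _ = (p:ℝ)⁻¹ * (p:ℝ)⁻¹ := mul_one _
  -- P3 middle
  have P3mid : ‖(∑ a ∈ Finset.Icc 1 (p-1), (a:ℚ_[p])^(4*j*p+2))/p
      - (∑ a ∈ Finset.Icc 1 (p-1), (a:ℚ_[p])^(4*j+2))/p
      - ((4*j : ℕ) : ℚ_[p]) * ∑ a ∈ Finset.Icc 1 (p-1),
          (a:ℚ_[p])^(4*j+2) * (((a:ℚ_[p])^(p-1) - 1)/p)‖ ≤ (p:ℝ)⁻¹ := by
    rw [Finset.sum_div, Finset.sum_div, Finset.mul_sum, ← Finset.sum_sub_distrib,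
      ← Finset.sum_sub_distrib]
    refine ultra_sum hpinv ?_
    intro a ha
    obtain ⟨ha1, ha2⟩ := Finset.mem_Icc.mp ha
    have hy1 : ‖(a:ℚ_[p])^(p-1) - 1‖ ≤ (p:ℝ)⁻¹ := norm_fermat ha1 ha2
    have hsplit : (a:ℚ_[p])^(4*j*p+2) = (a:ℚ_[p])^(4*j+2) * ((a:ℚ_[p])^(p-1))^(4*j) := by
      rw [← pow_mul, ← pow_add]
      congr 1
      have h1 : 1 ≤ p := by omega
      zify [h1]
      ring
    have heq : (a:ℚ_[p])^(4*j*p+2)/p - (a:ℚ_[p])^(4*j+2)/p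
        - ((4*j : ℕ) : ℚ_[p]) * ((a:ℚ_[p])^(4*j+2) * (((a:ℚ_[p])^(p-1) - 1)/p))
        = (a:ℚ_[p])^(4*j+2) * (((a:ℚ_[p])^(p-1))^(4*j) - 1
            - ((4*j : ℕ) : ℚ_[p]) * ((a:ℚ_[p])^(p-1) - 1)) / p := by
      rw [hsplit]; ring
    rw [heq]
    refine div_p_norm ?_
    calc ‖(a:ℚ_[p])^(4*j+2) * (((a:ℚ_[p])^(p-1))^(4*j) - 1
          - ((4*j : ℕ) : ℚ_[p]) * ((a:ℚ_[p])^(p-1) - 1))‖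
        = ‖(a:ℚ_[p])‖^(4*j+2) * ‖((a:ℚ_[p])^(p-1))^(4*j) - 1
          - ((4*j : ℕ) : ℚ_[p]) * ((a:ℚ_[p])^(p-1) - 1)‖ := by rw [norm_mul, norm_pow]
      _ ≤ 1 * ((p:ℝ)⁻¹ * (p:ℝ)⁻¹) := by
          refine mul_le_mul (pow_le_one₀ (norm_nonneg _) (norm_nat_le_one a)) ?_
            (norm_nonneg _) zero_le_one
          refine le_trans (norm_pow_sub_linear _ (le_trans hy1 (pinv_le_one hp5)) (4*j)) ?_
          rw [pow_two]
          exact mul_le_mul hy1 hy1 (norm_nonneg _) hpinv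
      _ = (p:ℝ)⁻¹ * (p:ℝ)⁻¹ := one_mul _
  -- exact identity for n₃
  have hmid3 : (∑ a ∈ Finset.Icc 1 (p-1), (a:ℚ_[p])^(4*j+1+p))/p
      = (∑ a ∈ Finset.Icc 1 (p-1), (a:ℚ_[p])^(4*j+2))/p
      + ∑ a ∈ Finset.Icc 1 (p-1), (a:ℚ_[p])^(4*j+2) * (((a:ℚ_[p])^(p-1) - 1)/p) := by
    rw [Finset.sum_div, Finset.sum_div, ← Finset.sum_add_distrib]
    refine Finset.sum_congr rfl ?_
    intro a ha
    have hsplit : (a:ℚ_[p])^(4*j+1+p) = (a:ℚ_[p])^(4*j+2) * (a:ℚ_[p])^(p-1) := by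
      rw [← pow_add]
      congr 1
      omega
    rw [hsplit]; ring
  -- P4
  have P4 : ‖(∑ a ∈ Finset.Icc 1 (p-1), (ω a : ℚ_[p])^(4*j) * (a:ℚ_[p]))
      - ∑ a ∈ Finset.Icc 1 (p-1), (a:ℚ_[p])^(4*j+1)‖ ≤ (p:ℝ)⁻¹ := by
    rw [← Finset.sum_sub_distrib]
    refine ultra_sum hpinv ?_
    intro a ha
    obtain ⟨ha1, ha2⟩ := Finset.mem_Icc.mp ha
    have heq : (ω a : ℚ_[p])^(4*j) * (a:ℚ_[p]) - (a:ℚ_[p])^(4*j+1)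
        = ((ω a : ℚ_[p])^(4*j) - (a:ℚ_[p])^(4*j)) * (a:ℚ_[p]) := by
      rw [pow_succ]; ring
    rw [heq, norm_mul]
    calc ‖(ω a : ℚ_[p])^(4*j) - (a:ℚ_[p])^(4*j)‖ * ‖(a:ℚ_[p])‖
        ≤ (p:ℝ)⁻¹ * 1 := by
          refine mul_le_mul ?_ (norm_nat_le_one a) (norm_nonneg _) hpinv
          exact le_trans (norm_pow_sub_pow_le _ _ (hωnorm a ha) (norm_nat_le_one a) (4*j))
            ((hω a ha1 ha2).2)
      _ = (p:ℝ)⁻¹ := mul_one _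
  -- P6
  have h6 : ‖(6:ℚ_[p])‖ = 1 := by
    have hnd : ¬ p ∣ 6 := by
      intro h
      have h1 := Nat.le_of_dvd (by norm_num) h
      interval_cases p
      · exact absurd h (by norm_num)
      · exact absurd hpprime (by norm_num)
    have hle : ‖((6 : ℤ) : ℚ_[p])‖ ≤ 1 := Padic.norm_int_le_one _
    have hlt : ¬ ‖((6 : ℤ) : ℚ_[p])‖ < 1 := by
      rw [Padic.norm_intCast_lt_one_iff]
      exact_mod_cast hnd
    have : ‖((6 : ℤ) : ℚ_[p])‖ = 1 := le_antisymm hle (not_lt.mp hlt)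
    simpa using this
  have P6 : ‖∑ a ∈ Finset.Icc 1 (p-1), (ω a : ℚ_[p])^(4*j) * ((p:ℚ_[p])/6)‖ ≤ (p:ℝ)⁻¹ := by
    refine ultra_sum hpinv ?_
    intro a ha
    rw [norm_mul, norm_div, Padic.norm_p, h6, div_one, norm_pow]
    calc ‖(ω a : ℚ_[p])‖^(4*j) * (p:ℝ)⁻¹ ≤ 1 * (p:ℝ)⁻¹ :=
        mul_le_mul_of_nonneg_right (pow_le_one₀ (norm_nonneg _) (hωnorm a ha)) hpinv
      _ = (p:ℝ)⁻¹ := one_mul _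
  -- rewrite the main product
  have hL : (p : ℚ_[p]) * ∑ a ∈ Finset.Icc 1 (p - 1),
        ((ω a : ℚ_[p])) ^ (4 * j) * (((a : ℚ_[p]) / p) ^ 2 - (a : ℚ_[p]) / p + 1 / 6)
      = (∑ a ∈ Finset.Icc 1 (p-1), (ω a : ℚ_[p])^(4*j) * ((a:ℚ_[p])^2 / p))
        - (∑ a ∈ Finset.Icc 1 (p-1), (ω a : ℚ_[p])^(4*j) * (a:ℚ_[p]))
        + ∑ a ∈ Finset.Icc 1 (p-1), (ω a : ℚ_[p])^(4*j) * ((p:ℚ_[p])/6) := by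
    rw [Finset.mul_sum, ← Finset.sum_sub_distrib, ← Finset.sum_add_distrib]
    refine Finset.sum_congr rfl ?_
    intro a _
    field_simp
  -- rewrite RHS cast
  have hR : (((1 - 4 * (j : ℚ)) * bernoulli (4 * j + 2) +
        4 * (j : ℚ) * bernoulli (4 * j + 1 + p) : ℚ) : ℚ_[p])
      = (1 - ((4*j : ℕ) : ℚ_[p])) * (bernoulli (4*j+2) : ℚ_[p])
        + ((4*j : ℕ) : ℚ_[p]) * (bernoulli (4*j+1+p) : ℚ_[p]) := by
    push_cast
    ring
  -- assemble
  have hB13 : ‖(bernoulli (4*j*p+2) : ℚ_[p]) - (bernoulli (4*j+2) : ℚ_[p])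
      - ((4*j : ℕ) : ℚ_[p]) * ∑ a ∈ Finset.Icc 1 (p-1),
        (a:ℚ_[p])^(4*j+2) * (((a:ℚ_[p])^(p-1) - 1)/p)‖ ≤ (p:ℝ)⁻¹ := by
    have heq : (bernoulli (4*j*p+2) : ℚ_[p]) - (bernoulli (4*j+2) : ℚ_[p])
        - ((4*j : ℕ) : ℚ_[p]) * ∑ a ∈ Finset.Icc 1 (p-1),
          (a:ℚ_[p])^(4*j+2) * (((a:ℚ_[p])^(p-1) - 1)/p)
        = -((∑ a ∈ Finset.Icc 1 (p-1), (a:ℚ_[p])^(4*j*p+2))/p - (bernoulli (4*j*p+2) : ℚ_[p]))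
          + ((∑ a ∈ Finset.Icc 1 (p-1), (a:ℚ_[p])^(4*j*p+2))/p
            - (∑ a ∈ Finset.Icc 1 (p-1), (a:ℚ_[p])^(4*j+2))/p
            - ((4*j : ℕ) : ℚ_[p]) * ∑ a ∈ Finset.Icc 1 (p-1),
              (a:ℚ_[p])^(4*j+2) * (((a:ℚ_[p])^(p-1) - 1)/p))
          + ((∑ a ∈ Finset.Icc 1 (p-1), (a:ℚ_[p])^(4*j+2))/p - (bernoulli (4*j+2) : ℚ_[p])) := by
      ring
    rw [heq]
    refine nadd (nadd ?_ P3mid) E2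
    rw [norm_neg]
    exact E1
  have hB23 : ‖(bernoulli (4*j+1+p) : ℚ_[p]) - (bernoulli (4*j+2) : ℚ_[p])
      - ∑ a ∈ Finset.Icc 1 (p-1), (a:ℚ_[p])^(4*j+2) * (((a:ℚ_[p])^(p-1) - 1)/p)‖ ≤ (p:ℝ)⁻¹ := by
    have heq : (bernoulli (4*j+1+p) : ℚ_[p]) - (bernoulli (4*j+2) : ℚ_[p])
        - ∑ a ∈ Finset.Icc 1 (p-1), (a:ℚ_[p])^(4*j+2) * (((a:ℚ_[p])^(p-1) - 1)/p)
        = -((∑ a ∈ Finset.Icc 1 (p-1), (a:ℚ_[p])^(4*j+1+p))/p - (bernoulli (4*j+1+p) : ℚ_[p]))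
          + ((∑ a ∈ Finset.Icc 1 (p-1), (a:ℚ_[p])^(4*j+2))/p - (bernoulli (4*j+2) : ℚ_[p])) := by
      rw [hmid3]
      ring
    rw [heq]
    refine nadd ?_ E2
    rw [norm_neg]
    exact E3
  -- final decomposition
  rw [hL, hR]
  have hfinal : (∑ a ∈ Finset.Icc 1 (p-1), (ω a : ℚ_[p])^(4*j) * ((a:ℚ_[p])^2 / p))
        - (∑ a ∈ Finset.Icc 1 (p-1), (ω a : ℚ_[p])^(4*j) * (a:ℚ_[p]))
        + (∑ a ∈ Finset.Icc 1 (p-1), (ω a : ℚ_[p])^(4*j) * ((p:ℚ_[p])/6))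
      - ((1 - ((4*j : ℕ) : ℚ_[p])) * (bernoulli (4*j+2) : ℚ_[p])
        + ((4*j : ℕ) : ℚ_[p]) * (bernoulli (4*j+1+p) : ℚ_[p]))
      = ((∑ a ∈ Finset.Icc 1 (p-1), (ω a : ℚ_[p])^(4*j) * ((a:ℚ_[p])^2 / p))
          - (∑ a ∈ Finset.Icc 1 (p-1), (a:ℚ_[p])^(4*j*p+2))/p)
        + ((∑ a ∈ Finset.Icc 1 (p-1), (a:ℚ_[p])^(4*j*p+2))/p - (bernoulli (4*j*p+2) : ℚ_[p]))
        + ((bernoulli (4*j*p+2) : ℚ_[p]) - (bernoulli (4*j+2) : ℚ_[p])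
            - ((4*j : ℕ) : ℚ_[p]) * ∑ a ∈ Finset.Icc 1 (p-1),
              (a:ℚ_[p])^(4*j+2) * (((a:ℚ_[p])^(p-1) - 1)/p))
        - ((4*j : ℕ) : ℚ_[p]) * ((bernoulli (4*j+1+p) : ℚ_[p]) - (bernoulli (4*j+2) : ℚ_[p])
            - ∑ a ∈ Finset.Icc 1 (p-1), (a:ℚ_[p])^(4*j+2) * (((a:ℚ_[p])^(p-1) - 1)/p))
        - ((∑ a ∈ Finset.Icc 1 (p-1), (ω a : ℚ_[p])^(4*j) * (a:ℚ_[p]))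
            - ∑ a ∈ Finset.Icc 1 (p-1), (a:ℚ_[p])^(4*j+1))
        - (∑ a ∈ Finset.Icc 1 (p-1), (a:ℚ_[p])^(4*j+1))
        + ∑ a ∈ Finset.Icc 1 (p-1), (ω a : ℚ_[p])^(4*j) * ((p:ℚ_[p])/6) := by
    ring
  rw [hfinal]
  refine nadd (nsub (nsub (nsub (nadd (nadd P1 E1) hB13) ?_) P4) P5) P6
  rw [norm_mul]
  calc ‖((4*j : ℕ) : ℚ_[p])‖ * ‖(bernoulli (4*j+1+p) : ℚ_[p]) - (bernoulli (4*j+2) : ℚ_[p])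
      - ∑ a ∈ Finset.Icc 1 (p-1), (a:ℚ_[p])^(4*j+2) * (((a:ℚ_[p])^(p-1) - 1)/p)‖
      ≤ 1 * (p:ℝ)⁻¹ := mul_le_mul (norm_nat_le_one _) hB23 (norm_nonneg _) zero_le_one
    _ = (p:ℝ)⁻¹ := one_mul _
end
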